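/- arXiv:1612.02619 — 2 statements merged into one kernel-verified Lean document; each statement's English description precedes it below -/
import Mathlib

section
/- Let J : P₂(ℝ^d) → (−∞,+∞] be a proper lower semicontinuous functional that is convex along generalised geodesics (λ = 0) and has at least one global minimiser; set Ĵ = min J. Fix r₀ ∈ (Ĵ,+∞] and θ ∈ (0,1]. If J satisfies the functional Łojasiewicz inequality with constant c_f > 0 (with these r₀, θ), then J satisfies the gradient Łojasiewicz inequality with the same r₀ and θ and with constant c_g = c_f^θ: for every ρ ∈ P₂(ℝ^d) with Ĵ < J[ρ] < r₀ and every ν ∈ ∂J[ρ], c_f^θ (J[ρ] − Ĵ)^{1−θ} ≤ ‖ν‖_ρ. In particular, for convex (along generalised geodesics) J the gradient and functional Łojasiewicz inequalities are equivalent up to multiplicative constants. -/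
open MeasureTheory Filter Set
open scoped ENNReal Topology RealInnerProductSpace

noncomputable section

/-- Euclidean space ℝ^d. -/
abbrev Ed (d : ℕ) := EuclideanSpace ℝ (Fin d)

/-- `P₂(ℝ^d)`: Borel probability measures with finite second moment. -/
def P2 (d : ℕ) : Set (Measure (Ed d)) :=
  {μ | IsProbabilityMeasure μ ∧ (∫⁻ x, (‖x‖₊ : ℝ≥0∞) ^ 2 ∂μ) < ⊤}

/-- Couplings of two measures. -/
def couplings {d : ℕ} (μ ν : Measure (Ed d)) : Set (Measure (Ed d × Ed d)) :=
  {γ | γ.map Prod.fst = μ ∧ γ.map Prod.snd = ν}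

/-- Quadratic transport cost of a plan. -/
def transportCost {d : ℕ} (γ : Measure (Ed d × Ed d)) : ℝ≥0∞ :=
  ∫⁻ p, (‖p.1 - p.2‖₊ : ℝ≥0∞) ^ 2 ∂γ

/-- Squared Monge–Kantorovich distance. -/
def W2sq {d : ℕ} (μ ν : Measure (Ed d)) : ℝ≥0∞ :=
  ⨅ γ ∈ couplings μ ν, transportCost γ

/-- The Monge–Kantorovich (Wasserstein) distance `W₂`. -/
def W2 {d : ℕ} (μ ν : Measure (Ed d)) : ℝ :=
  Real.sqrt (W2sq μ ν).toReal

/-- Distance from a measure to a set of measures. -/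
def W2Set {d : ℕ} (μ : Measure (Ed d)) (S : Set (Measure (Ed d))) : ℝ :=
  sInf ((fun ν => W2 μ ν) '' S)

/-- Optimal transport plans. -/
def IsOptimalPlan {d : ℕ} (μ ν : Measure (Ed d)) (γ : Measure (Ed d × Ed d)) : Prop :=
  γ ∈ couplings μ ν ∧ transportCost γ = W2sq μ ν

/-- The set of global minimisers of `J` over `P₂(ℝ^d)`. -/
def argminSet {d : ℕ} (J : Measure (Ed d) → EReal) : Set (Measure (Ed d)) :=
  {ρ | ρ ∈ P2 d ∧ ∀ ν ∈ P2 d, J ρ ≤ J ν}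

/-- λ-convexity along generalised geodesics. -/
def LambdaConvexGG {d : ℕ} (J : Measure (Ed d) → EReal) (lam : ℝ) : Prop :=
  ∀ ρ ∈ P2 d, ∀ ν₀ ∈ P2 d, ∀ ν₁ ∈ P2 d, J ν₀ ≠ ⊤ → J ν₁ ≠ ⊤ →
    ∀ Ψ : Measure (Ed d × Ed d × Ed d),
      Ψ.map (fun p => p.1) = ρ →
      IsOptimalPlan ρ ν₀ (Ψ.map (fun p => (p.1, p.2.1))) →
      IsOptimalPlan ρ ν₁ (Ψ.map (fun p => (p.1, p.2.2))) →
      ∀ t ∈ Icc (0:ℝ) 1,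
        J (Ψ.map (fun p => (1-t) • p.2.1 + t • p.2.2)) ≤
          (((1-t) * (J ν₀).toReal + t * (J ν₁).toReal
            - (lam/2) * t * (1-t) *
              (∫⁻ p, (‖p.2.2 - p.2.1‖₊ : ℝ≥0∞) ^ 2 ∂Ψ).toReal : ℝ) : EReal)

/-- Sequential lower semicontinuity for the Monge–Kantorovich distance. -/
def LscW2 {d : ℕ} (J : Measure (Ed d) → EReal) : Prop :=
  ∀ ρ ∈ P2 d, ∀ ρs : ℕ → Measure (Ed d), (∀ n, ρs n ∈ P2 d) →
    Tendsto (fun n => W2 (ρs n) ρ) atTop (𝓝 0) →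
    J ρ ≤ liminf (fun n => J (ρs n)) atTop

/-- `J` is proper: it never takes the value −∞ and is finite somewhere on `P₂`. -/
def ProperJ {d : ℕ} (J : Measure (Ed d) → EReal) : Prop :=
  (∀ ρ, J ρ ≠ ⊥) ∧ ∃ ρ ∈ P2 d, J ρ ≠ ⊤

/-- Subdifferential of a λ-convex functional at `μ`. -/
def subdiff {d : ℕ} (J : Measure (Ed d) → EReal) (lam : ℝ) (μ : Measure (Ed d)) :
    Set (Ed d → Ed d) :=
  {γ | MemLp γ 2 μ ∧ J μ ≠ ⊤ ∧
    ∀ ν ∈ P2 d, ∃ Ψ, IsOptimalPlan μ ν Ψ ∧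
      J μ + (((∫ p, (inner ℝ (γ p.1) (p.2 - p.1) : ℝ) ∂Ψ) + (lam/2) * (W2 μ ν)^2 : ℝ) : EReal) ≤ J ν}

/-- `L²_μ` norm of a subgradient. -/
def sgNorm {d : ℕ} (γ : Ed d → Ed d) (μ : Measure (Ed d)) : ℝ :=
  (eLpNorm γ 2 μ).toReal

/-- Norm of the minimal-norm subgradient `∂⁰J[μ]`. -/
def minSgNorm {d : ℕ} (J : Measure (Ed d) → EReal) (lam : ℝ) (μ : Measure (Ed d)) : ℝ :=
  sInf ((fun γ => sgNorm γ μ) '' subdiff J lam μ)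

/-- Gradient Łojasiewicz inequality with parameters `Jhat = min J`, `r₀`, `θ`, `cg`. -/
def LojaGrad {d : ℕ} (J : Measure (Ed d) → EReal) (lam : ℝ) (Jhat : ℝ) (r₀ : EReal)
    (θ cg : ℝ) : Prop :=
  ∀ ρ ∈ P2 d, (Jhat : EReal) < J ρ → J ρ < r₀ →
    ∀ γ ∈ subdiff J lam ρ, cg * ((J ρ).toReal - Jhat) ^ (1-θ) ≤ sgNorm γ ρ

/-- Functional Łojasiewicz inequality with parameters `Jhat = min J`, `r₀`, `θ`, `cf`. -/
def LojaFun {d : ℕ} (J : Measure (Ed d) → EReal) (Jhat : ℝ) (r₀ : EReal)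
    (θ cf : ℝ) : Prop :=
  ∀ ρ ∈ P2 d, (Jhat : EReal) < J ρ → J ρ < r₀ →
    cf * W2Set ρ (argminSet J) ^ (1/θ) ≤ (J ρ).toReal - Jhat

/-- The metric derivative `|ρ'|(t)` of a curve of measures. -/
def mDeriv {d : ℕ} (ρ : ℝ → Measure (Ed d)) (t : ℝ) : ℝ :=
  limsup (fun h => W2 (ρ (t+h)) (ρ t) / |h|) (𝓝[≠] (0:ℝ))

/-- Gradient-flow trajectory of `J` starting at `ρ₀`. -/
structure IsGradientFlow {d : ℕ} (J : Measure (Ed d) → EReal) (lam : ℝ)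
    (ρ₀ : Measure (Ed d)) (ρ : ℝ → Measure (Ed d)) : Prop where
  init : ρ 0 = ρ₀
  mem : ∀ t, 0 ≤ t → ρ t ∈ P2 d
  findom : ∀ t, 0 ≤ t → J (ρ t) ≠ ⊤
  speed_loc_int : ∀ T, 0 < T → IntegrableOn (mDeriv ρ) (Icc 0 T)
  metric_bound : ∀ t s, 0 ≤ t → t ≤ s → W2 (ρ t) (ρ s) ≤ ∫ τ in t..s, mDeriv ρ τ
  vel : ∀ᵐ t ∂(volume.restrict (Ioi (0:ℝ))),
    ∃ γ ∈ subdiff J lam (ρ t), sgNorm γ (ρ t) = mDeriv ρ t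
  nonincr : ∀ t s, 0 ≤ t → t ≤ s → J (ρ s) ≤ J (ρ t)
  energy : ∀ t s, 0 ≤ t → t ≤ s →
    (J (ρ s)).toReal - (J (ρ t)).toReal = - ∫ τ in t..s, (mDeriv ρ τ)^2

open scoped Classical in
/-- Relative entropy `H(ρ|ρ*) = ∫ f log f dρ* = ∫ (f log f + 1 − f) dρ*`, `f = dρ/dρ*`. -/
def relEnt {d : ℕ} (ρ ρs : Measure (Ed d)) : ℝ≥0∞ :=
  if ρ ≪ ρs then
    ∫⁻ x, ENNReal.ofReal ((ρ.rnDeriv ρs x).toReal * Real.log ((ρ.rnDeriv ρs x).toReal)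
      + 1 - (ρ.rnDeriv ρs x).toReal) ∂ρs
  else ⊤

/-- Support of a measure. -/
def msupport {d : ℕ} (ρ : Measure (Ed d)) : Set (Ed d) :=
  {x | ∀ U : Set (Ed d), IsOpen U → x ∈ U → 0 < ρ U}
lemma W2sq_lt_top' {d : ℕ} {ρ ν : Measure (Ed d)} (hρ : ρ ∈ P2 d) (hν : ν ∈ P2 d) :
    W2sq ρ ν < ⊤ := by
  obtain ⟨hρp, hρ2⟩ := hρ
  obtain ⟨hνp, hν2⟩ := hν
  haveI := hρp; haveI := hνp
  have hcoup : ρ.prod ν ∈ couplings ρ ν := by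
    constructor
    · rw [Measure.map_fst_prod, measure_univ, one_smul]
    · rw [Measure.map_snd_prod, measure_univ, one_smul]
  have hle : W2sq ρ ν ≤ transportCost (ρ.prod ν) := iInf₂_le _ hcoup
  have key : ∀ a b : ℝ≥0∞, a * b ≤ a ^ 2 + b ^ 2 := by
    intro a b
    rcases le_total a b with h | h
    · calc a * b ≤ b * b := mul_le_mul_left h b
        _ = b ^ 2 := (sq b).symm
        _ ≤ a ^ 2 + b ^ 2 := le_add_self
    · calc a * b ≤ a * a := mul_le_mul_right h a
        _ = a ^ 2 := (sq a).symm
        _ ≤ a ^ 2 + b ^ 2 := le_self_add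
  have hbound : transportCost (ρ.prod ν) ≤
      ∫⁻ p, (3 * (‖p.1‖₊ : ℝ≥0∞) ^ 2 + 3 * (‖p.2‖₊ : ℝ≥0∞) ^ 2) ∂(ρ.prod ν) := by
    refine lintegral_mono fun p => ?_
    have h1 : (‖p.1 - p.2‖₊ : ℝ≥0∞) ≤ (‖p.1‖₊ : ℝ≥0∞) + (‖p.2‖₊ : ℝ≥0∞) := by
      exact_mod_cast nnnorm_sub_le p.1 p.2
    set a := (‖p.1‖₊ : ℝ≥0∞); set b := (‖p.2‖₊ : ℝ≥0∞)
    calc (‖p.1 - p.2‖₊ : ℝ≥0∞) ^ 2 ≤ (a + b) ^ 2 := by gcongr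
      _ = a ^ 2 + 2 * (a * b) + b ^ 2 := by ring
      _ ≤ a ^ 2 + 2 * (a ^ 2 + b ^ 2) + b ^ 2 := by gcongr; exact key a b
      _ = 3 * a ^ 2 + 3 * b ^ 2 := by ring
  have hm1 : Measurable fun x : Ed d => (‖x‖₊ : ℝ≥0∞) ^ 2 :=
    measurable_nnnorm.coe_nnreal_ennreal.pow_const 2
  have hfst : ∫⁻ p : Ed d × Ed d, (‖p.1‖₊ : ℝ≥0∞) ^ 2 ∂(ρ.prod ν)
      = ∫⁻ x, (‖x‖₊ : ℝ≥0∞) ^ 2 ∂ρ := by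
    rw [← lintegral_map hm1 measurable_fst, Measure.map_fst_prod, measure_univ, one_smul]
  have hsnd : ∫⁻ p : Ed d × Ed d, (‖p.2‖₊ : ℝ≥0∞) ^ 2 ∂(ρ.prod ν)
      = ∫⁻ y, (‖y‖₊ : ℝ≥0∞) ^ 2 ∂ν := by
    rw [← lintegral_map hm1 measurable_snd, Measure.map_snd_prod, measure_univ, one_smul]
  have hsplit : ∫⁻ p, (3 * (‖p.1‖₊ : ℝ≥0∞) ^ 2 + 3 * (‖p.2‖₊ : ℝ≥0∞) ^ 2) ∂(ρ.prod ν)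
      = 3 * (∫⁻ x, (‖x‖₊ : ℝ≥0∞) ^ 2 ∂ρ) + 3 * (∫⁻ y, (‖y‖₊ : ℝ≥0∞) ^ 2 ∂ν) := by
    have hmf : Measurable fun p : Ed d × Ed d => (‖p.1‖₊ : ℝ≥0∞) ^ 2 :=
      measurable_fst.nnnorm.coe_nnreal_ennreal.pow_const 2
    have hms : Measurable fun p : Ed d × Ed d => (‖p.2‖₊ : ℝ≥0∞) ^ 2 :=
      measurable_snd.nnnorm.coe_nnreal_ennreal.pow_const 2
    rw [lintegral_add_left (hmf.const_mul 3)]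
    rw [lintegral_const_mul _ hmf, lintegral_const_mul _ hms]
    rw [hfst, hsnd]
  refine hle.trans_lt ?_
  refine hbound.trans_lt ?_
  rw [hsplit]
  have : (3 : ℝ≥0∞) ≠ ⊤ := by norm_num
  exact ENNReal.add_lt_top.2 ⟨ENNReal.mul_lt_top this.lt_top hρ2, ENNReal.mul_lt_top this.lt_top hν2⟩


lemma stepA' {d : ℕ} {J : Measure (Ed d) → EReal} (hbot : ∀ ρ, J ρ ≠ ⊥) {Jhat : ℝ}
    {ρ : Measure (Ed d)} (hρ : ρ ∈ P2 d) {γ : Ed d → Ed d} (hγ : γ ∈ subdiff J 0 ρ)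
    {ν : Measure (Ed d)} (hν : ν ∈ P2 d) (hJν : J ν = (Jhat : EReal)) :
    (J ρ).toReal - Jhat ≤ sgNorm γ ρ * W2 ρ ν := by
  obtain ⟨hγ2, hJρtop, hsub⟩ := hγ
  obtain ⟨Ψ, hopt, hineq⟩ := hsub ν hν
  obtain ⟨⟨hΨ1, hΨ2⟩, hcost⟩ := hopt
  set I := ∫ p, (inner ℝ (γ p.1) (p.2 - p.1) : ℝ) ∂Ψ with hIdef
  have hIneq : (J ρ).toReal + I ≤ Jhat := by
    simp only [zero_div, zero_mul, add_zero, hJν] at hineq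
    rw [← EReal.coe_toReal hJρtop (hbot ρ), ← EReal.coe_add] at hineq
    exact_mod_cast hineq
  -- measurability / Memℒp setup
  have hγsm : AEStronglyMeasurable γ (Measure.map Prod.fst Ψ) := by
    rw [hΨ1]; exact hγ2.aestronglyMeasurable
  have hγ2' : MemLp γ 2 (Measure.map Prod.fst Ψ) := by rw [hΨ1]; exact hγ2
  have hFm : MemLp (fun p : Ed d × Ed d => γ p.1) 2 Ψ :=
    (memLp_map_measure_iff hγsm measurable_fst.aemeasurable).1 hγ2'
  have hGsm : AEStronglyMeasurable (fun p : Ed d × Ed d => p.2 - p.1) Ψ :=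
    (measurable_snd.sub measurable_fst).aestronglyMeasurable
  have hcost_fin : transportCost Ψ < ⊤ := by rw [hcost]; exact W2sq_lt_top' hρ hν
  have hrpow2 : ∀ x : ℝ≥0∞, x ^ (2:ℝ) = x ^ 2 := fun x => by
    rw [show (2:ℝ) = ((2:ℕ):ℝ) by norm_num, ENNReal.rpow_natCast]
  have hGnorm : eLpNorm (fun p : Ed d × Ed d => p.2 - p.1) 2 Ψ
      = (W2sq ρ ν) ^ (1/2 : ℝ) := by
    rw [eLpNorm_eq_lintegral_rpow_enorm_toReal two_ne_zero ENNReal.ofNat_ne_top, ← hcost,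
      ENNReal.toReal_ofNat]
    congr 1
    unfold transportCost
    refine lintegral_congr fun p => ?_
    rw [hrpow2, enorm_eq_nnnorm, show ‖p.2 - p.1‖₊ = ‖p.1 - p.2‖₊ by rw [← neg_sub, nnnorm_neg]]
  have hGm : MemLp (fun p : Ed d × Ed d => p.2 - p.1) 2 Ψ := by
    refine ⟨hGsm, ?_⟩
    rw [hGnorm, ← hcost]
    exact ENNReal.rpow_lt_top_of_nonneg (by norm_num) hcost_fin.ne
  have hGval : (eLpNorm (fun p : Ed d × Ed d => p.2 - p.1) 2 Ψ).toReal = W2 ρ ν := by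
    rw [hGnorm, ← ENNReal.toReal_rpow, W2, Real.sqrt_eq_rpow]
  have hFval : (eLpNorm (fun p : Ed d × Ed d => γ p.1) 2 Ψ).toReal = sgNorm γ ρ := by
    unfold sgNorm
    rw [← hΨ1, eLpNorm_map_measure hγsm measurable_fst.aemeasurable]
    rfl
  set Flp := hFm.toLp _ with hFlp
  set Glp := hGm.toLp _ with hGlp
  have hinner : (inner ℝ Flp Glp : ℝ) = I := by
    rw [MeasureTheory.L2.inner_def]
    refine integral_congr_ae ?_
    filter_upwards [hFm.coeFn_toLp, hGm.coeFn_toLp] with p h1 h2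
    rw [h1, h2]
  have hCS : -I ≤ sgNorm γ ρ * W2 ρ ν := by
    calc -I = -(inner ℝ Flp Glp : ℝ) := by rw [hinner]
      _ ≤ |(inner ℝ Flp Glp : ℝ)| := (neg_le_abs _)
      _ ≤ ‖Flp‖ * ‖Glp‖ := abs_real_inner_le_norm _ _
      _ = sgNorm γ ρ * W2 ρ ν := by
          rw [hFlp, hGlp, Lp.norm_toLp, Lp.norm_toLp, hFval, hGval]
  linarith

/-- for convex functionals, the functional Łojasiewicz inequality
implies the gradient Łojasiewicz inequality with `c_g = c_f^θ`. -/
theorem functional_loja_implies_gradient_loja (d : ℕ) (J : Measure (Ed d) → EReal)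
    (hproper : ProperJ J) (hlsc : LscW2 J) (hconv : LambdaConvexGG J 0)
    (Jhat : ℝ) (hmin : ∃ ρ ∈ P2 d, J ρ = (Jhat : EReal) ∧ ∀ ν ∈ P2 d, J ρ ≤ J ν)
    (r₀ : EReal) (hr₀ : (Jhat : EReal) < r₀)
    (θ : ℝ) (hθ : θ ∈ Ioc (0:ℝ) 1)
    (cf : ℝ) (hcf : 0 < cf)
    (hLF : LojaFun J Jhat r₀ θ cf) :
    LojaGrad J 0 Jhat r₀ θ (cf ^ θ) := by
  
  intro ρ hρ h1 h2 γ hγ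
  obtain ⟨ρstar, hρsmem, hρsval, hρsmin⟩ := hmin
  have hJρtop : J ρ ≠ ⊤ := hγ.2.1
  have hJρbot : J ρ ≠ ⊥ := hproper.1 ρ
  set E := (J ρ).toReal - Jhat with hEdef
  have hE : 0 < E := by
    have h : (Jhat : EReal) < ((J ρ).toReal : EReal) := by
      rw [EReal.coe_toReal hJρtop hJρbot]; exact h1
    have := EReal.coe_lt_coe_iff.1 h
    simp only [hEdef]; linarith
  have hJval : ∀ ν ∈ argminSet J, J ν = (Jhat : EReal) := by
    intro ν hν
    refine le_antisymm ?_ ?_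
    · rw [← hρsval]; exact hν.2 ρstar hρsmem
    · rw [← hρsval]; exact hρsmin ν hν.1
  have hA : ∀ ν ∈ argminSet J, E ≤ sgNorm γ ρ * W2 ρ ν := fun ν hν =>
    stepA' hproper.1 hρ hγ hν.1 (hJval ν hν)
  have hargmem : ρstar ∈ argminSet J := ⟨hρsmem, hρsmin⟩
  have hGnonneg : 0 ≤ sgNorm γ ρ := ENNReal.toReal_nonneg
  have hGpos : 0 < sgNorm γ ρ := by
    rcases hGnonneg.lt_or_eq with h | h
    · exact h
    · exfalso
      have := hA ρstar hargmem
      rw [← h, zero_mul] at this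
      linarith
  set G := sgNorm γ ρ with hGdef
  have hWlb : E / G ≤ W2Set ρ (argminSet J) := by
    refine le_csInf ⟨_, mem_image_of_mem _ hargmem⟩ ?_
    rintro b ⟨ν, hν, rfl⟩
    rw [div_le_iff₀ hGpos]
    have := hA ν hν
    linarith
  obtain ⟨hθ0, hθ1⟩ := hθ
  have hLFρ := hLF ρ hρ h1 h2
  have h3 : cf * (E / G) ^ (1/θ) ≤ E := by
    calc cf * (E / G) ^ (1/θ)
        ≤ cf * (W2Set ρ (argminSet J)) ^ (1/θ) :=
          mul_le_mul_of_nonneg_left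
            (Real.rpow_le_rpow (by positivity) hWlb (by positivity)) hcf.le
      _ ≤ E := hLFρ
  have h5 : (E / G) ^ (1/θ) ≤ E / cf := by
    rw [le_div_iff₀ hcf]
    linarith [h3]
  have h6 := Real.rpow_le_rpow (Real.rpow_nonneg (by positivity) _) h5 hθ0.le
  rw [← Real.rpow_mul (by positivity), one_div_mul_cancel hθ0.ne', Real.rpow_one,
    Real.div_rpow hE.le hcf.le] at h6
  have hcfθ : 0 < cf ^ θ := Real.rpow_pos_of_pos hcf θ
  have hEθ : 0 < E ^ θ := Real.rpow_pos_of_pos hE θ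
  have h7 : E * cf ^ θ ≤ E ^ θ * G := by
    rw [div_le_div_iff₀ hGpos hcfθ] at h6
    linarith
  have h8 : E ^ (1 - θ) = E / E ^ θ := by
    rw [Real.rpow_sub hE, Real.rpow_one]
  show cf ^ θ * E ^ (1 - θ) ≤ G
  rw [h8, mul_div_assoc', div_le_iff₀ hEθ]
  nlinarith [h7]
end
end

section
/- (Lifting the Łojasiewicz growth inequality from ℝ^d to P₂(ℝ^d), case θ ≤ 1/2) Let V : ℝ^d → ℝ be convex and continuous with V̂ = inf V > −∞ and S = Argmin V nonempty and compact, and define J[ρ] = ∫ V dρ on P₂(ℝ^d), so that min J = V̂ and Argmin J = {ρ ∈ P₂(ℝ^d) : supp ρ ⊆ S}. Fix r₀ ∈ (V̂, +∞] and θ ∈ (0, 1/2], c > 0. If c · dist(x, S)^{1/θ} ≤ V(x) − V̂ for every x ∈ ℝ^d with V̂ < V(x) < r₀, then for every ρ ∈ P₂(ℝ^d) with supp ρ ⊆ V^{−1}([V̂, r₀)) one has c · W₂(ρ, Argmin J)^{1/θ} ≤ J[ρ] − V̂. -/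
open MeasureTheory Filter Set
open scoped ENNReal Topology RealInnerProductSpace

noncomputable section

lemma msupport_ae {d : ℕ} (ρ : Measure (Ed d)) : ∀ᵐ x ∂ρ, x ∈ msupport ρ := by
  rw [ae_iff]
  have hsub : {x | ¬ x ∈ msupport ρ} ⊆
      ⋃ i : {U : Set (Ed d) // IsOpen U ∧ ρ U = 0}, (i : Set (Ed d)) := by
    intro x hx
    simp only [msupport, mem_setOf_eq, not_forall] at hx
    obtain ⟨U, hU, hxU, hρU⟩ := hx
    exact mem_iUnion.2 ⟨⟨U, hU, by simpa using hρU⟩, hxU⟩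
  obtain ⟨T, hTc, hT⟩ := TopologicalSpace.isOpen_iUnion_countable
    (fun i : {U : Set (Ed d) // IsOpen U ∧ ρ U = 0} => (i : Set (Ed d))) (fun i => i.2.1)
  refine measure_mono_null hsub ?_
  rw [← hT]
  exact (measure_biUnion_null_iff hTc).2 fun i _ => i.2.2

lemma exists_proj {d : ℕ} {S : Set (Ed d)} (hne : S.Nonempty) (hcl : IsClosed S)
    (hconv : Convex ℝ S) :
    ∃ p : Ed d → Ed d, LipschitzWith 1 p ∧ (∀ x, p x ∈ S) ∧
      ∀ x, ‖x - p x‖ = Metric.infDist x S := by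
  choose p hpS hp using exists_norm_eq_iInf_of_complete_convex hne hcl.isComplete hconv
  have hinner : ∀ x, ∀ w ∈ S, ⟪x - p x, w - p x⟫ ≤ 0 := fun x =>
    (norm_eq_iInf_iff_real_inner_le_zero hconv (hpS x)).1 (hp x)
  have expand : ∀ a b u v : Ed d, ⟪a - b, u - v⟫ = ⟪a,u⟫ - ⟪a,v⟫ - ⟪b,u⟫ + ⟪b,v⟫ := by
    intro a b u v; simp [inner_sub_left, inner_sub_right]; ring
  refine ⟨p, ?_, hpS, fun x => ?_⟩
  · apply LipschitzWith.of_dist_le_mul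
    intro x y
    have h1 := hinner x (p y) (hpS y)
    have h2 := hinner y (p x) (hpS x)
    rw [expand] at h1 h2
    have hx2 : ‖p x - p y‖^2 = ⟪p x,p x⟫ - 2*⟪p x, p y⟫ + ⟪p y, p y⟫ := by
      rw [← real_inner_self_eq_norm_sq, expand, real_inner_comm (p y) (p x)]; ring
    have hcs := real_inner_le_norm (x - y) (p x - p y)
    rw [expand] at hcs
    have hkey : ‖p x - p y‖^2 ≤ ‖x - y‖ * ‖p x - p y‖ := by
      rw [hx2]
      have c1 := real_inner_comm (p x) (p y)
      have c2 := real_inner_comm x (p y)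
      have c3 := real_inner_comm y (p x)
      nlinarith [h1, h2, hcs]
    rw [dist_eq_norm, dist_eq_norm, NNReal.coe_one, one_mul]
    have hn := norm_nonneg (p x - p y)
    rcases eq_or_lt_of_le hn with h0 | h0
    · rw [← h0]; exact norm_nonneg _
    · exact le_of_mul_le_mul_right (by nlinarith) h0
  · rw [hp x, Metric.infDist_eq_iInf]
    simp_rw [dist_eq_norm]

/-- lifting the Łojasiewicz growth inequality from `ℝ^d` to
`P₂(ℝ^d)` for potential energies, case `θ ∈ (0,1/2]` (same constant, same
exponent). -/
theorem pointwise_growth_lifts_small_theta (d : ℕ) (V : Ed d → ℝ)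
    (hVconv : ConvexOn ℝ univ V) (hVcont : Continuous V)
    (Vhat : ℝ) (hVhat : IsGLB (range V) Vhat)
    (S : Set (Ed d)) (hS : S = {x | V x = Vhat}) (hSne : S.Nonempty) (hScp : IsCompact S)
    (r₀ : EReal) (hr₀ : (Vhat : EReal) < r₀)
    (c θ : ℝ) (hc : 0 < c) (hθ : θ ∈ Ioc (0:ℝ) (1/2))
    (hyp : ∀ x : Ed d, Vhat < V x → ((V x : ℝ) : EReal) < r₀ →
      c * Metric.infDist x S ^ (1/θ) ≤ V x - Vhat) :
    ∀ ρ ∈ P2 d, Integrable V ρ →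
      msupport ρ ⊆ {x | ((V x : ℝ) : EReal) < r₀} →
      c * W2Set ρ {ρ' | ρ' ∈ P2 d ∧ msupport ρ' ⊆ S} ^ (1/θ) ≤ (∫ x, V x ∂ρ) - Vhat := by
  intro ρ hρ hVint hsupp
  obtain ⟨hρprob, hρ2⟩ := hρ
  haveI := hρprob
  have hθ0 : 0 < θ := hθ.1
  have hθinv : (0:ℝ) < 1/θ := by positivity
  have hVhatle : ∀ x, Vhat ≤ V x := fun x => hVhat.1 ⟨x, rfl⟩
  have hScl : IsClosed S := hScp.isClosed
  have hSconv : Convex ℝ S := by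
    have hSeq : S = {x | V x ≤ Vhat} := by
      rw [hS]; ext x; simp only [mem_setOf_eq]
      exact ⟨fun h => h.le, fun h => le_antisymm h (hVhatle x)⟩
    rw [hSeq]
    simpa using hVconv.convex_le Vhat
  obtain ⟨p, hplip, hpS, hpdist⟩ := exists_proj hSne hScl hSconv
  have hpmeas : Measurable p := hplip.continuous.measurable
  set f : Ed d → ℝ := fun x => Metric.infDist x S with hf
  have hfcont : Continuous f := Metric.continuous_infDist_pt S
  have hf0 : ∀ x, 0 ≤ f x := fun x => Metric.infDist_nonneg
  set ρs : Measure (Ed d) := ρ.map p with hρs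
  have hρsprob : IsProbabilityMeasure ρs := Measure.isProbabilityMeasure_map hpmeas.aemeasurable
  obtain ⟨R, hR⟩ := hScp.isBounded.subset_closedBall 0
  have hρsP2 : ρs ∈ P2 d := by
    refine ⟨hρsprob, ?_⟩
    rw [hρs, lintegral_map (by fun_prop) hpmeas]
    calc ∫⁻ x, (‖p x‖₊:ℝ≥0∞)^2 ∂ρ ≤ ∫⁻ _, (ENNReal.ofReal R)^2 ∂ρ := by
          refine lintegral_mono fun x => ?_
          have hpx : ‖p x‖ ≤ R := by
            simpa [mem_closedBall_zero_iff] using hR (hpS x)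
          gcongr
          rw [← enorm_eq_nnnorm, ← ofReal_norm_eq_enorm]
          exact ENNReal.ofReal_le_ofReal hpx
      _ < ⊤ := by
          rw [lintegral_const]
          exact ENNReal.mul_lt_top (ENNReal.pow_lt_top ENNReal.ofReal_lt_top) (by simp)
  have hρsT : ρs ∈ {ρ' | ρ' ∈ P2 d ∧ msupport ρ' ⊆ S} := by
    refine ⟨hρsP2, fun x hx => ?_⟩
    by_contra hxS
    have h0 : ρs Sᶜ = 0 := by
      rw [hρs, Measure.map_apply hpmeas hScl.measurableSet.compl]
      have : p ⁻¹' Sᶜ = ∅ := eq_empty_iff_forall_notMem.2 fun y hy => hy (hpS y)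
      simp [this]
    exact absurd (hx Sᶜ hScl.isOpen_compl hxS) (by simp [h0])
  set A : ℝ≥0∞ := ∫⁻ x, (‖f x‖₊ : ℝ≥0∞) ^ (2:ℝ) ∂ρ with hA
  set B : ℝ≥0∞ := ∫⁻ x, (‖f x‖₊ : ℝ≥0∞) ^ (1/θ) ∂ρ with hB
  set h : Ed d → ℝ := fun x => f x ^ (1/θ) with hh
  have hhcont : Continuous h := hfcont.rpow_const (fun x => Or.inr hθinv.le)
  have hh0 : ∀ x, 0 ≤ h x := fun x => Real.rpow_nonneg (hf0 x) _
  have hae_pt : ∀ᵐ x ∂ρ, c * h x ≤ V x - Vhat := by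
    filter_upwards [msupport_ae ρ] with x hx
    have hxr : ((V x : ℝ) : EReal) < r₀ := hsupp hx
    rcases eq_or_lt_of_le (hVhatle x) with heq | hlt
    · have hxS : x ∈ S := by rw [hS]; exact heq.symm
      have hfx : f x = 0 := Metric.infDist_zero_of_mem hxS
      have hhx : h x = 0 := by
        simp only [hh, hfx]; exact Real.zero_rpow (ne_of_gt hθinv)
      rw [hhx, mul_zero, ← heq, sub_self]
    · exact hyp x hlt hxr
  have hgint : Integrable (fun x => V x - Vhat) ρ := hVint.sub (integrable_const _)
  have hkint : Integrable (fun x => c * h x) ρ := by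
    refine Integrable.mono' hgint ((continuous_const.mul hhcont).aestronglyMeasurable) ?_
    filter_upwards [hae_pt] with x hx
    rw [Real.norm_of_nonneg (mul_nonneg hc.le (hh0 x))]
    exact hx
  have hhint : Integrable h ρ := by
    have := hkint.const_mul c⁻¹
    have heq : (fun x => c⁻¹ * (c * h x)) = h := by
      funext x; field_simp
    rwa [heq] at this
  have hBeq : B = ENNReal.ofReal (∫ x, h x ∂ρ) := by
    rw [hB, MeasureTheory.ofReal_integral_eq_lintegral_ofReal hhint (ae_of_all _ hh0)]
    refine lintegral_congr fun x => ?_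
    rw [← enorm_eq_nnnorm, Real.enorm_eq_ofReal (hf0 x), ← ENNReal.ofReal_rpow_of_nonneg (hf0 x) hθinv.le]
  have hBne : B ≠ ⊤ := by rw [hBeq]; exact ENNReal.ofReal_ne_top
  have hq2 : (2:ℝ≥0∞) ≤ ENNReal.ofReal (1/θ) := by
    rw [show (2:ℝ≥0∞) = ENNReal.ofReal 2 by norm_num]
    apply ENNReal.ofReal_le_ofReal
    rw [le_div_iff₀ hθ0, mul_comm, ← le_div_iff₀ (by norm_num : (0:ℝ) < 2)]
    simpa [div_eq_mul_inv] using hθ.2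
  have hlp := eLpNorm_le_eLpNorm_of_exponent_le (μ := ρ) (f := f) hq2
    hfcont.aestronglyMeasurable
  have e2 : eLpNorm f 2 ρ = A ^ (2⁻¹:ℝ) := by
    rw [eLpNorm_eq_lintegral_rpow_enorm_toReal (by norm_num) (by norm_num)]
    simp only [enorm_eq_nnnorm]
    rw [hA]
    norm_num
  have eq' : eLpNorm f (ENNReal.ofReal (1/θ)) ρ = B ^ θ := by
    rw [eLpNorm_eq_lintegral_rpow_enorm_toReal (by positivity) (by simp)]
    simp only [enorm_eq_nnnorm]
    rw [hB,
      ENNReal.toReal_ofReal hθinv.le, one_div_one_div]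
  have hAB : A ^ (2⁻¹ * (1/θ)) ≤ B := by
    rw [e2, eq'] at hlp
    have h2 := ENNReal.rpow_le_rpow hlp hθinv.le
    rw [← ENNReal.rpow_mul, ← ENNReal.rpow_mul] at h2
    have hexp : θ * (1/θ) = 1 := by field_simp
    rwa [hexp, ENNReal.rpow_one] at h2
  have hAne : A ≠ ⊤ := by
    intro htop
    rw [htop, ENNReal.top_rpow_of_pos (by positivity)] at hAB
    exact hBne (top_le_iff.1 hAB)
  have hm : Measurable (fun x : Ed d => (x, p x)) := measurable_id.prodMk hpmeas
  have hcoupling : (ρ.map (fun x => (x, p x))) ∈ couplings ρ ρs := by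
    constructor
    · rw [Measure.map_map measurable_fst hm]
      have hid : (Prod.fst ∘ fun x : Ed d => (x, p x)) = id := rfl
      rw [hid, Measure.map_id]
    · rw [Measure.map_map measurable_snd hm]
      rfl
  have hcost : transportCost (ρ.map (fun x => (x, p x))) = A := by
    rw [transportCost, lintegral_map (by fun_prop) hm, hA]
    refine lintegral_congr fun x => ?_
    have hnn : ‖x - p x‖₊ = ‖f x‖₊ := by
      show ‖x - p x‖₊ = ‖Metric.infDist x S‖₊
      rw [← hpdist x]; exact (nnnorm_norm _).symm
    rw [hnn, ← ENNReal.rpow_natCast]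
    norm_num
  have hW2sq : W2sq ρ ρs ≤ A := by
    rw [W2sq]
    exact (iInf₂_le _ hcoupling).trans_eq hcost
  have hW2 : W2 ρ ρs ≤ Real.sqrt A.toReal :=
    Real.sqrt_le_sqrt (ENNReal.toReal_mono hAne hW2sq)
  have hbdd : ∀ y ∈ (fun ν => W2 ρ ν) '' {ρ' | ρ' ∈ P2 d ∧ msupport ρ' ⊆ S}, 0 ≤ y := by
    rintro y ⟨ν, hν, rfl⟩; exact Real.sqrt_nonneg _
  have hW2Set_nonneg : 0 ≤ W2Set ρ {ρ' | ρ' ∈ P2 d ∧ msupport ρ' ⊆ S} :=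
    le_csInf ⟨_, ⟨ρs, hρsT, rfl⟩⟩ hbdd
  have hW2Set_le : W2Set ρ {ρ' | ρ' ∈ P2 d ∧ msupport ρ' ⊆ S} ≤ W2 ρ ρs :=
    csInf_le ⟨0, hbdd⟩ ⟨ρs, hρsT, rfl⟩
  have step1 : W2Set ρ {ρ' | ρ' ∈ P2 d ∧ msupport ρ' ⊆ S} ^ (1/θ)
      ≤ (Real.sqrt A.toReal) ^ (1/θ) :=
    Real.rpow_le_rpow hW2Set_nonneg (hW2Set_le.trans hW2) hθinv.le
  have step2 : (Real.sqrt A.toReal) ^ (1/θ) = (A ^ (2⁻¹ * (1/θ))).toReal := by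
    rw [Real.sqrt_eq_rpow, ← Real.rpow_mul ENNReal.toReal_nonneg, ENNReal.toReal_rpow]
    norm_num
  have step3 : (A ^ (2⁻¹ * (1/θ))).toReal ≤ B.toReal := ENNReal.toReal_mono hBne hAB
  have step4 : B.toReal = ∫ x, h x ∂ρ := by
    rw [hBeq, ENNReal.toReal_ofReal (integral_nonneg hh0)]
  have step5 : c * ∫ x, h x ∂ρ ≤ ∫ x, (V x - Vhat) ∂ρ := by
    rw [← integral_const_mul]
    exact integral_mono_ae hkint hgint hae_pt
  have step6 : ∫ x, (V x - Vhat) ∂ρ = (∫ x, V x ∂ρ) - Vhat := by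
    rw [integral_sub hVint (integrable_const _), integral_const]
    simp
  calc c * W2Set ρ {ρ' | ρ' ∈ P2 d ∧ msupport ρ' ⊆ S} ^ (1/θ)
      ≤ c * ∫ x, h x ∂ρ := by
        have := step1.trans ((step2.le.trans step3).trans step4.le)
        exact mul_le_mul_of_nonneg_left this hc.le
    _ ≤ (∫ x, V x ∂ρ) - Vhat := step5.trans step6.le
end
end
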